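/- Let f : ℝ² → ℝ be a radially symmetric Schwartz function, i.e., f(x) = F(|x|) for some function F. Let u = R^⊥ f = (R₂ f, −R₁ f), where R_i = ∂_i Λ^{−1} are the Riesz transforms. Then u · ∇f = 0 pointwise on ℝ². -/

import Mathlib

open MeasureTheory FourierTransform Filter Real
open scoped ENNReal

noncomputable section

/-- The plane ℝ². -/
abbrev V2 : Type := EuclideanSpace ℝ (Fin 2)

/-- Fourier multiplier operator with symbol `m`. -/
def fmul (m : V2 → ℂ) (f : V2 → ℂ) : V2 → ℂ := 𝓕⁻ (fun ξ => m ξ * 𝓕 f ξ)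

/-- `Λ^a`, the Fourier multiplier with symbol `|ξ|^a`. -/
def lam (a : ℝ) (f : V2 → ℂ) : V2 → ℂ := fmul (fun ξ => ((‖ξ‖ ^ a : ℝ) : ℂ)) f

/-- `Λ^a` acting on real-valued functions. -/
def lamR (a : ℝ) (f : V2 → ℝ) : V2 → ℝ := fun x => (lam a (fun y => (f y : ℂ)) x).re

/-- The Riesz transform `R_i = ∂_i Λ^{-1}`, Fourier multiplier with symbol `-i ξ_i/|ξ|`. -/
def rz (i : Fin 2) (f : V2 → ℂ) : V2 → ℂ := fmul (fun ξ => -Complex.I * ((ξ i / ‖ξ‖ : ℝ) : ℂ)) f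

/-- Riesz transform acting on real-valued functions. -/
def rzR (i : Fin 2) (f : V2 → ℝ) : V2 → ℝ := fun x => (rz i (fun y => (f y : ℂ)) x).re

/-- The partial derivative `∂_i f`. -/
def pd (i : Fin 2) (f : V2 → ℝ) : V2 → ℝ := fun x => fderiv ℝ f x (EuclideanSpace.single i 1)

/-- `(R^⊥θ)·∇φ = (R₂θ)∂₁φ - (R₁θ)∂₂φ`. -/
def udg (θ φ : V2 → ℝ) : V2 → ℝ := fun x => rzR 1 θ x * pd 0 φ x - rzR 0 θ x * pd 1 φ x

/-- The fractional heat kernel `K_γ(t)`, with Fourier transform `exp(-|ξ|^γ t)`. -/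
def Kker (γ t : ℝ) : V2 → ℂ := 𝓕⁻ (fun ξ : V2 => ((Real.exp (-(‖ξ‖ ^ γ) * t) : ℝ) : ℂ))

/-- The fractional heat semigroup `e^{-tΛ^γ} f = K_γ(t) ∗ f`. -/
def heat (γ t : ℝ) (f : V2 → ℂ) : V2 → ℂ := fun x => ∫ y, Kker γ t (x - y) * f y


def sqgComplexify (f : SchwartzMap V2 ℝ) : SchwartzMap V2 ℂ where
  toFun := fun x => (f x : ℂ)
  smooth' := Complex.ofRealCLM.contDiff.comp f.smooth'
  decay' := by
    intro k n
    obtain ⟨C, hC⟩ := f.decay' k n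
    refine ⟨C, fun x => ?_⟩
    have h : ‖iteratedFDeriv ℝ n (⇑Complex.ofRealLI ∘ ⇑f) x‖ = ‖iteratedFDeriv ℝ n (⇑f) x‖ :=
      Complex.ofRealLI.norm_iteratedFDeriv_comp_left (f.smooth ⊤).contDiffAt (mod_cast le_top)
    have he : (fun y => ((f y : ℝ) : ℂ)) = (⇑Complex.ofRealLI ∘ ⇑f) := rfl
    rw [he, h]
    exact hC x

lemma sqg_int (f : SchwartzMap V2 ℂ) (m : V2 → ℂ) (hm : AEStronglyMeasurable m (volume : Measure V2))
    (C : ℝ) (hC : ∀ ξ, ‖m ξ‖ ≤ C) : Integrable (fun ξ => m ξ * 𝓕 (⇑f) ξ) := by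
  have h : Integrable (𝓕 (⇑f)) := (SchwartzMap.fourierTransformCLM ℂ f).integrable
  exact h.bdd_mul hm (Filter.Eventually.of_forall hC)

lemma circle_meas (x : V2) :
    AEStronglyMeasurable (fun v : V2 => ((𝐞 (inner ℝ v x : ℝ) : Circle) : ℂ)) (volume : Measure V2) := by
  refine Continuous.aestronglyMeasurable ?_
  exact continuous_subtype_val.comp (Real.continuous_fourierChar.comp (continuous_id.inner continuous_const))

lemma invFT_sub (g h : V2 → ℂ) (x : V2) (hg : Integrable g) (hh : Integrable h) :
    𝓕⁻ (fun ξ => g ξ - h ξ) x = 𝓕⁻ g x - 𝓕⁻ h x := by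
  simp only [Real.fourierInv_eq, Circle.smul_def, smul_eq_mul]
  rw [← integral_sub (hg.bdd_mul (c := 1) (circle_meas x) (Filter.Eventually.of_forall fun v => le_of_eq (Circle.norm_coe _)))
      (hh.bdd_mul (c := 1) (circle_meas x) (Filter.Eventually.of_forall fun v => le_of_eq (Circle.norm_coe _)))]
  congr 1; ext v; ring

lemma invFT_const_mul (c : ℂ) (g : V2 → ℂ) (x : V2) :
    c * 𝓕⁻ g x = 𝓕⁻ (fun ξ => c * g ξ) x := by
  simp only [Real.fourierInv_eq, Circle.smul_def, smul_eq_mul]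
  rw [← smul_eq_mul, ← integral_smul]
  congr 1; ext v; simp [smul_eq_mul]; ring

lemma invFT_neg (g : V2 → ℂ) (x : V2) : 𝓕⁻ (fun ξ => -g ξ) x = -𝓕⁻ g x := by
  simp only [Real.fourierInv_eq, Circle.smul_def, smul_eq_mul]
  rw [← integral_neg]
  congr 1; ext v; ring


/-- for radially symmetric Schwartz `f`, the SQG nonlinearity vanishes:
`(R^⊥ f)·∇f = (R₂f)∂₁f - (R₁f)∂₂f = 0` pointwise on `ℝ²`. -/
theorem stmt5 (f : SchwartzMap V2 ℝ) (hrad : ∃ F : ℝ → ℝ, ∀ x : V2, f x = F ‖x‖) :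
    ∀ x : V2, udg (fun y => f y) (fun y => f y) x = 0 := by
  obtain ⟨F, hF⟩ := hrad
  intro x
  set fC : V2 → ℂ := fun y => ((f y : ℝ) : ℂ) with hfCdef
  have hfz : fC = ⇑(sqgComplexify f) := rfl
  -- the gradient of a radial function vanishes in anti-invariant directions
  have grad0 : ∀ (A : V2 ≃ₗᵢ[ℝ] V2), A x = x → ∀ v : V2, A v = -v → fderiv ℝ (⇑f) x v = 0 := by
    intro A hAx v hAv
    have hcomp : (⇑f ∘ ⇑A.toContinuousLinearEquiv) = ⇑f := by
      funext y
      simp only [Function.comp_apply]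
      have : (A.toContinuousLinearEquiv y) = A y := rfl
      rw [this, hF, hF, A.norm_map]
    have hdf : DifferentiableAt ℝ (⇑f) (A x) := (f.smooth 1).differentiable (by simp) |>.differentiableAt
    have hD : HasFDerivAt (⇑f ∘ ⇑A.toContinuousLinearEquiv)
        ((fderiv ℝ (⇑f) (A x)).comp (A.toContinuousLinearEquiv : V2 →L[ℝ] V2)) x := by
      have h1 := hdf.hasFDerivAt
      have h2 := A.toContinuousLinearEquiv.hasFDerivAt (x := x)
      have : A.toContinuousLinearEquiv x = A x := rfl
      rw [← this] at h1
      exact h1.comp x h2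
    rw [hcomp] at hD
    have hfd : fderiv ℝ (⇑f) x = (fderiv ℝ (⇑f) (A x)).comp (A.toContinuousLinearEquiv : V2 →L[ℝ] V2) :=
      hD.fderiv
    have hv : fderiv ℝ (⇑f) x v = fderiv ℝ (⇑f) (A x) (A v) := by
      rw [hfd]; rfl
    rw [hAx, hAv, map_neg] at hv
    linarith
  by_cases hx0 : x = 0
  · -- at the origin the gradient vanishes
    have hpd : ∀ i : Fin 2, pd i (⇑f) x = 0 := by
      intro i
      have := grad0 (LinearIsometryEquiv.neg ℝ) (by simp [hx0]) (EuclideanSpace.single i 1) (by simp)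
      simpa [pd] using this
    simp [udg, hpd 0, hpd 1]
  · -- reflection across the line through x
    set K : Submodule ℝ V2 := ℝ ∙ x with hK
    have hxK : x ∈ K := Submodule.mem_span_singleton_self x
    set A : V2 ≃ₗᵢ[ℝ] V2 := K.reflection with hA
    have hAx : A x = x := Submodule.reflection_mem_subspace_eq_self hxK
    set p : V2 := (WithLp.equiv 2 (Fin 2 → ℝ)).symm ![-(x 1), x 0] with hp
    have hp0 : p 0 = -(x 1) := rfl
    have hp1 : p 1 = x 0 := rfl
    have hcross : ∀ v : V2, (inner ℝ p v : ℝ) = x 0 * v 1 - x 1 * v 0 := by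
      intro v
      simp only [PiLp.inner_apply, RCLike.inner_apply, conj_trivial, Fin.sum_univ_two, hp0, hp1]
      ring
    have hpK : p ∈ Kᗮ := by
      rw [hK, Submodule.mem_orthogonal_singleton_iff_inner_right]
      have : (inner ℝ p x : ℝ) = 0 := by rw [hcross]; ring
      rw [real_inner_comm] at this
      exact this
    have hAp : A p = -p := Submodule.reflection_mem_subspace_orthogonalComplement_eq_neg hpK
    have hinner : ∀ ξ : V2, (inner ℝ p (A ξ) : ℝ) = -(inner ℝ p ξ : ℝ) := by
      intro ξ
      have h1 : (inner ℝ p (A ξ) : ℝ) = -(inner ℝ (A p) (A ξ) : ℝ) := by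
        rw [hAp, inner_neg_left]; ring
      rw [h1, A.inner_map_map]
    have hfCA : (fC ∘ ⇑A) = fC := by
      funext y
      simp only [Function.comp_apply, hfCdef]
      rw [hF, hF, A.norm_map]
    have hFinv : ∀ ξ : V2, 𝓕 fC (A ξ) = 𝓕 fC ξ := by
      intro ξ
      rw [← Real.fourier_comp_linearIsometry A fC ξ, hfCA]
    -- the multipliers
    have hWdef : ∀ i : Fin 2, rzR i (fun y => f y) x
        = (𝓕⁻ (fun ξ => (-Complex.I * ((ξ i / ‖ξ‖ : ℝ) : ℂ)) * 𝓕 fC ξ) x).re := fun i => rfl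
    have hmi_meas : ∀ i : Fin 2, AEStronglyMeasurable
        (fun ξ : V2 => -Complex.I * ((ξ i / ‖ξ‖ : ℝ) : ℂ)) (volume : Measure V2) := by
      intro i
      refine (Measurable.aestronglyMeasurable ?_)
      have h1 : Measurable fun ξ : V2 => ξ i := (EuclideanSpace.proj (𝕜 := ℝ) i).continuous.measurable
      exact (Complex.measurable_ofReal.comp (h1.div measurable_norm)).const_mul _
    have hcoord : ∀ (i : Fin 2) (ξ : V2), |ξ i| ≤ ‖ξ‖ := by
      intro i ξ
      have h1 : (inner ℝ (EuclideanSpace.single i (1:ℝ)) ξ : ℝ) = ξ i := by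
        rw [EuclideanSpace.inner_single_left]; simp
      have h2 := abs_real_inner_le_norm (EuclideanSpace.single i (1:ℝ)) ξ
      rw [h1, EuclideanSpace.norm_single] at h2
      simpa using h2
    have hmi_bdd : ∀ (i : Fin 2) (ξ : V2), ‖-Complex.I * ((ξ i / ‖ξ‖ : ℝ) : ℂ)‖ ≤ 1 := by
      intro i ξ
      rw [norm_mul, norm_neg, Complex.norm_I, one_mul, Complex.norm_real, Real.norm_eq_abs,
        abs_div, abs_norm]
      exact div_le_one_of_le₀ (hcoord i ξ) (norm_nonneg ξ)
    have hint : ∀ i : Fin 2, Integrable (fun ξ : V2 => (-Complex.I * ((ξ i / ‖ξ‖ : ℝ) : ℂ)) * 𝓕 fC ξ) := by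
      intro i
      rw [hfz]
      exact sqg_int (sqgComplexify f) _ (hmi_meas i) 1 (hmi_bdd i)
    -- the antisymmetric combination
    set g : V2 → ℂ := fun ξ => -Complex.I * (((x 0 * ξ 1 - x 1 * ξ 0) / ‖ξ‖ : ℝ) : ℂ) * 𝓕 fC ξ with hg
    have hcomb : (fun ξ : V2 => (x 0 : ℂ) * ((-Complex.I * ((ξ 1 / ‖ξ‖ : ℝ) : ℂ)) * 𝓕 fC ξ)
        - (x 1 : ℂ) * ((-Complex.I * ((ξ 0 / ‖ξ‖ : ℝ) : ℂ)) * 𝓕 fC ξ)) = g := by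
      funext ξ
      simp only [hg]
      push_cast
      ring
    have hgA : (g ∘ ⇑A) = fun ξ => -g ξ := by
      funext ξ
      simp only [Function.comp_apply, hg]
      rw [hFinv ξ, A.norm_map]
      have hc : x 0 * (A ξ) 1 - x 1 * (A ξ) 0 = -(x 0 * ξ 1 - x 1 * ξ 0) := by
        have e1 := hcross (A ξ)
        have e2 := hcross ξ
        have e3 := hinner ξ
        linarith
      rw [hc]
      push_cast
      ring
    have hg0 : 𝓕⁻ g x = 0 := by
      have h1 : 𝓕⁻ (g ∘ ⇑A) x = 𝓕⁻ g x := by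
        rw [Real.fourierInv_comp_linearIsometry A g x, hAx]
      rw [hgA, invFT_neg] at h1
      have h2 : 𝓕⁻ g x + 𝓕⁻ g x = 0 := by linear_combination -h1
      exact add_self_eq_zero.mp h2
    have hT : (x 0 : ℂ) * (𝓕⁻ (fun ξ => (-Complex.I * ((ξ 1 / ‖ξ‖ : ℝ) : ℂ)) * 𝓕 fC ξ) x)
        - (x 1 : ℂ) * (𝓕⁻ (fun ξ => (-Complex.I * ((ξ 0 / ‖ξ‖ : ℝ) : ℂ)) * 𝓕 fC ξ) x) = 0 := by
      rw [invFT_const_mul, invFT_const_mul, ← invFT_sub _ _ x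
        ((hint 1).const_mul _) ((hint 0).const_mul _)]
      have : (fun ξ : V2 => (x 0 : ℂ) * ((-Complex.I * ((ξ 1 / ‖ξ‖ : ℝ) : ℂ)) * 𝓕 fC ξ)
          - (x 1 : ℂ) * ((-Complex.I * ((ξ 0 / ‖ξ‖ : ℝ) : ℂ)) * 𝓕 fC ξ)) = g := hcomb
      rw [this, hg0]
    have hWc : x 0 * rzR 1 (fun y => f y) x = x 1 * rzR 0 (fun y => f y) x := by
      have hre := congrArg Complex.re hT
      rw [hWdef 0, hWdef 1]
      simpa [Complex.sub_re, Complex.mul_re, Complex.ofReal_re, Complex.ofReal_im,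
        sub_eq_zero] using hre
    -- gradient part
    have hpdec : p = (-(x 1)) • EuclideanSpace.single (0 : Fin 2) (1:ℝ)
        + (x 0) • EuclideanSpace.single (1 : Fin 2) (1:ℝ) := by
      ext i
      fin_cases i <;>
        simp [hp, EuclideanSpace.single_apply, WithLp.equiv_symm_apply, PiLp.toLp_apply]
    have hgrad : x 0 * pd 1 (fun y => f y) x - x 1 * pd 0 (fun y => f y) x = 0 := by
      have h0 := grad0 A hAx p hAp
      rw [hpdec] at h0
      simp only [map_add, _root_.map_smul, smul_eq_mul] at h0
      have e0 : pd 0 (fun y => f y) x = fderiv ℝ (⇑f) x (EuclideanSpace.single (0 : Fin 2) (1:ℝ)) := rfl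
      have e1 : pd 1 (fun y => f y) x = fderiv ℝ (⇑f) x (EuclideanSpace.single (1 : Fin 2) (1:ℝ)) := rfl
      rw [e0, e1]
      linarith
    have hxi : x 0 ≠ 0 ∨ x 1 ≠ 0 := by
      by_contra h
      push_neg at h
      apply hx0
      ext i
      fin_cases i <;> simp [h.1, h.2]
    simp only [udg]
    rcases hxi with h | h
    · have hz : x 0 * (rzR 1 (fun y => f y) x * pd 0 (fun y => f y) x
          - rzR 0 (fun y => f y) x * pd 1 (fun y => f y) x) = 0 := by
        linear_combination pd 0 (fun y => f y) x * hWc - rzR 0 (fun y => f y) x * hgrad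
      exact (mul_eq_zero.mp hz).resolve_left h
    · have hz : x 1 * (rzR 1 (fun y => f y) x * pd 0 (fun y => f y) x
          - rzR 0 (fun y => f y) x * pd 1 (fun y => f y) x) = 0 := by
        linear_combination pd 1 (fun y => f y) x * hWc - rzR 1 (fun y => f y) x * hgrad
      exact (mul_eq_zero.mp hz).resolve_left h
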